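/- Let d ≥ 1, let z be a standard Gaussian vector on ℝ^d, let v ∈ ℝ^d with v ≠ 0, and let R_v denote the reflection along v, i.e., R_v z = z − 2⟨v, z⟩v/‖v‖². Suppose O : ℝ^d → ℝ^d is a linear orthogonal map with O v = v (so O restricts to an orthogonal transformation of the hyperplane {v}⊥), and suppose f : ℝ^d → ℝ is measurable and satisfies f(O(R_v z)) = f(z) for all z ∈ ℝ^d. Then for every real-analytic function F : ℝ → ℝ such that z ↦ F(f(z))⟨v, z⟩ is integrable with respect to the standard Gaussian measure, E[F(f(z))⟨v, z⟩] = 0. -/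

import Mathlib

open MeasureTheory ProbabilityTheory

/-- The standard Gaussian measure on `ℝ^d` (i.i.d. `N(0,1)` coordinates). -/
noncomputable def stdGaussian (d : ℕ) : Measure (EuclideanSpace ℝ (Fin d)) :=
  (Measure.pi fun _ => gaussianReal 0 1).map (MeasurableEquiv.toLp 2 (Fin d → ℝ))

/-- The reflection along the direction `v`: `R_v z = z - 2⟨v,z⟩v/‖v‖²`. -/
noncomputable def reflAlong {d : ℕ} (v : EuclideanSpace ℝ (Fin d)) :
    EuclideanSpace ℝ (Fin d) → EuclideanSpace ℝ (Fin d) :=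
  fun z => z - (2 * (inner ℝ v z : ℝ) / ‖v‖ ^ 2) • v

lemma aux_volume_euclidean (d : ℕ) :
    (volume : Measure (EuclideanSpace ℝ (Fin d))) =
      (Measure.pi fun _ => (volume : Measure ℝ)).map (MeasurableEquiv.toLp 2 (Fin d → ℝ)) := by
  rw [← volume_pi]
  exact ((EuclideanSpace.volume_preserving_symm_measurableEquiv_toLp (Fin d)).symm _).map_eq.symm

lemma aux_lintegral_pi_prod {n : ℕ} (f : Fin n → ℝ → ENNReal) (hf : ∀ i, Measurable (f i)) :
    ∫⁻ x : Fin n → ℝ, ∏ i, f i (x i) ∂(Measure.pi fun _ => (volume : Measure ℝ)) =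
      ∏ i, ∫⁻ x, f i x := by
  induction n with
  | zero => simp
  | succ n ih =>
    have A := (measurePreserving_piFinSuccAbove (fun _ : Fin (n+1) => (volume : Measure ℝ)) 0).symm
    have hmeas : Measurable fun x : Fin (n+1) → ℝ => ∏ i, f i (x i) :=
      Finset.measurable_prod _ fun i _ => (hf i).comp (measurable_pi_apply i)
    have hg : Measurable fun b : Fin n → ℝ => ∏ i, f i.succ (b i) :=
      Finset.measurable_prod _ fun i _ => (hf i.succ).comp (measurable_pi_apply i)
    rw [← A.lintegral_comp hmeas]
    simp_rw [MeasurableEquiv.piFinSuccAbove_symm_apply, Fin.insertNthEquiv,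
      Fin.prod_univ_succ, Fin.insertNth_zero]
    simp only [Fin.zero_succAbove, Equiv.coe_fn_mk, Function.comp_def, Fin.cons_zero,
      Fin.cons_succ, cast_eq]
    exact (lintegral_prod_mul (f := f 0) (g := fun b : Fin n → ℝ => ∏ i, f i.succ (b i))
      (hf 0).aemeasurable hg.aemeasurable).trans
      (by rw [ih (fun i => f i.succ) (fun i => hf i.succ)])

lemma aux_pi_withDensity {n : ℕ} (f : Fin n → ℝ → ENNReal) (hf : ∀ i, Measurable (f i))
    (hfin : ∀ i, SigmaFinite ((volume : Measure ℝ).withDensity (f i))) :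
    (Measure.pi fun i => (volume : Measure ℝ).withDensity (f i)) =
      (Measure.pi fun _ => (volume : Measure ℝ)).withDensity (fun x => ∏ i, f i (x i)) := by
  haveI := hfin
  refine Measure.pi_eq fun s hs => ?_
  have key : ∀ x : Fin n → ℝ, (Set.univ.pi s).indicator (fun x => ∏ i, f i (x i)) x =
      ∏ i, (s i).indicator (f i) (x i) := by
    intro x
    by_cases hx : x ∈ Set.univ.pi s
    · rw [Set.indicator_of_mem hx]
      exact Finset.prod_congr rfl fun i _ =>
        (Set.indicator_of_mem (hx i (Set.mem_univ i)) _).symm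
    · rw [Set.indicator_of_notMem hx]
      have : ∃ i, x i ∉ s i := by
        by_contra h
        push_neg at h
        exact hx fun i _ => h i
      obtain ⟨i, hi⟩ := this
      exact (Finset.prod_eq_zero (Finset.mem_univ i)
        (Set.indicator_of_notMem hi _)).symm
  calc ((Measure.pi fun _ => (volume : Measure ℝ)).withDensity fun x => ∏ i, f i (x i))
        (Set.univ.pi s)
      = ∫⁻ x in Set.univ.pi s, ∏ i, f i (x i) ∂(Measure.pi fun _ => (volume : Measure ℝ)) :=
        withDensity_apply _ (MeasurableSet.univ_pi hs)
    _ = ∫⁻ x, (Set.univ.pi s).indicator (fun x => ∏ i, f i (x i)) x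
          ∂(Measure.pi fun _ => (volume : Measure ℝ)) :=
        (lintegral_indicator (MeasurableSet.univ_pi hs) _).symm
    _ = ∫⁻ x, ∏ i, (s i).indicator (f i) (x i) ∂(Measure.pi fun _ => (volume : Measure ℝ)) :=
        lintegral_congr key
    _ = ∏ i, ∫⁻ x, (s i).indicator (f i) x ∂(volume : Measure ℝ) :=
        aux_lintegral_pi_prod _ fun i => (hf i).indicator (hs i)
    _ = ∏ i, ((volume : Measure ℝ).withDensity (f i)) (s i) :=
        Finset.prod_congr rfl fun i _ => by
          rw [lintegral_indicator (hs i), withDensity_apply _ (hs i)]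

/-- the standard gaussian as a density against Lebesgue on Euclidean space -/
lemma aux_stdGaussian_eq (d : ℕ) :
    stdGaussian d = (volume : Measure (EuclideanSpace ℝ (Fin d))).withDensity
      (fun z => ENNReal.ofReal
        ((Real.sqrt (2 * Real.pi))⁻¹ ^ d * Real.exp (-‖z‖ ^ 2 / 2))) := by
  have h1 : gaussianReal 0 1 = (volume : Measure ℝ).withDensity (gaussianPDF 0 1) :=
    gaussianReal_of_var_ne_zero 0 one_ne_zero
  have hfin : ∀ _i : Fin d, SigmaFinite ((volume : Measure ℝ).withDensity (gaussianPDF 0 1)) :=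
    fun _ => by rw [← h1]; infer_instance
  unfold _root_.stdGaussian
  rw [h1]
  rw [aux_pi_withDensity _ (fun _ => measurable_gaussianPDF 0 1) hfin, aux_volume_euclidean]
  ext s hs
  rw [MeasurableEquiv.map_apply, withDensity_apply _ hs,
    withDensity_apply _ (hs.preimage (MeasurableEquiv.toLp 2 (Fin d → ℝ)).measurable),
    Measure.restrict_map (MeasurableEquiv.toLp 2 (Fin d → ℝ)).measurable hs, lintegral_map_equiv]
  congr 1
  funext (z : Fin d → ℝ)
  have hnorm : ‖(MeasurableEquiv.toLp 2 (Fin d → ℝ)) z‖ ^ 2 = ∑ i, z i ^ 2 := by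
    rw [EuclideanSpace.norm_eq]
    simp only [MeasurableEquiv.coe_toLp, PiLp.toLp_apply]
    rw [Real.sq_sqrt (Finset.sum_nonneg fun i _ => sq_nonneg _)]
    exact Finset.sum_congr rfl fun i _ => by rw [Real.norm_eq_abs, sq_abs]
  unfold gaussianPDF
  rw [← ENNReal.ofReal_prod_of_nonneg fun i _ => gaussianPDFReal_nonneg 0 1 (z i)]
  congr 1
  unfold gaussianPDFReal
  simp only [NNReal.coe_one, mul_one, sub_zero]
  rw [Finset.prod_mul_distrib, Finset.prod_const, Finset.card_univ, Fintype.card_fin,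
    ← Real.exp_sum]
  congr 1
  rw [hnorm, ← Finset.sum_div, Finset.sum_neg_distrib]

lemma aux_measurePreserving (d : ℕ)
    (T : EuclideanSpace ℝ (Fin d) ≃ₗᵢ[ℝ] EuclideanSpace ℝ (Fin d)) :
    MeasurePreserving T (stdGaussian d) (stdGaussian d) := by
  set G : EuclideanSpace ℝ (Fin d) → ENNReal := fun z =>
    ENNReal.ofReal ((Real.sqrt (2 * Real.pi))⁻¹ ^ d * Real.exp (-‖z‖ ^ 2 / 2)) with hGdef
  have hG : ∀ z, G (T z) = G z := by intro z; simp [hGdef, T.norm_map]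
  have hGm : Measurable G := by
    apply ENNReal.measurable_ofReal.comp
    exact (Continuous.mul continuous_const
      (((continuous_norm.pow 2).neg.div_const 2).rexp)).measurable
  have hTm : Measurable ⇑T := T.continuous.measurable
  refine ⟨hTm, ?_⟩
  rw [aux_stdGaussian_eq]
  ext s hs
  rw [Measure.map_apply hTm hs, withDensity_apply _ (hTm hs), withDensity_apply _ hs]
  calc ∫⁻ x in ⇑T ⁻¹' s, G x ∂volume
      = ∫⁻ x in ⇑T ⁻¹' s, G (T x) ∂volume := lintegral_congr fun x => (hG x).symm
    _ = ∫⁻ y in s, G y ∂(Measure.map T volume) := (setLIntegral_map hs hGm hTm).symm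
    _ = ∫⁻ y in s, G y ∂volume := by rw [T.measurePreserving.map_eq]

/-- Orthogonally-even-symmetric directions are hard: if `f ∘ (O ∘ R_v) = f` for some
orthogonal `O` fixing `v`, then no analytic transformation of the output of `f`
correlates linearly with `v` under the standard Gaussian. -/
theorem orthogonally_even_symmetric_direction_is_hard
    (d : ℕ) (hd : 1 ≤ d)
    (v : EuclideanSpace ℝ (Fin d)) (hv : v ≠ 0)
    (O : EuclideanSpace ℝ (Fin d) ≃ₗᵢ[ℝ] EuclideanSpace ℝ (Fin d))
    (hOv : O v = v)
    (f : EuclideanSpace ℝ (Fin d) → ℝ) (hf : Measurable f)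
    (hsym : ∀ z, f (O (reflAlong v z)) = f z) :
    ∀ F : ℝ → ℝ, (∀ x, AnalyticAt ℝ F x) →
      Integrable (fun z => F (f z) * (inner ℝ v z : ℝ)) (stdGaussian d) →
      ∫ z, F (f z) * (inner ℝ v z : ℝ) ∂(stdGaussian d) = 0 := by
  intro F hF hint
  have hv' : ‖v‖ ≠ 0 := norm_ne_zero_iff.mpr hv
  have hrefl : ∀ z, (Submodule.reflection ((ℝ ∙ v)ᗮ)) z = reflAlong v z := by
    intro z
    rw [Submodule.reflection_orthogonal_apply, Submodule.reflection_singleton_apply]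
    simp only [RCLike.ofReal_real_eq_id, id_eq]
    unfold reflAlong
    have h2 : (2 : ℕ) • ((inner ℝ v z : ℝ) / ‖v‖ ^ 2) • v
        = (2 * (inner ℝ v z : ℝ) / ‖v‖ ^ 2) • v := by
      rw [two_smul, mul_div_assoc, two_mul, add_smul]
    rw [h2]
    abel
  set T : EuclideanSpace ℝ (Fin d) ≃ₗᵢ[ℝ] EuclideanSpace ℝ (Fin d) :=
    (Submodule.reflection ((ℝ ∙ v)ᗮ)).trans O with hTdef
  have hTz : ∀ z, T z = O (reflAlong v z) := by
    intro z; rw [hTdef, LinearIsometryEquiv.trans_apply, hrefl]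
  have hfT : ∀ z, f (T z) = f z := fun z => by rw [hTz]; exact hsym z
  have hinner : ∀ z, (inner ℝ v (T z) : ℝ) = -(inner ℝ v z : ℝ) := by
    intro z
    rw [hTz]
    have h3 := O.inner_map_map v (reflAlong v z)
    rw [hOv] at h3
    rw [h3]
    unfold reflAlong
    rw [inner_sub_right, real_inner_smul_right, real_inner_self_eq_norm_sq]
    field_simp
    ring
  have hMP := aux_measurePreserving d T
  have key := hMP.integral_comp (T.toHomeomorph.measurableEmbedding)
    (fun z => F (f z) * (inner ℝ v z : ℝ))
  have key2 : ∫ z, F (f (T z)) * (inner ℝ v (T z) : ℝ) ∂(stdGaussian d)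
      = - ∫ z, F (f z) * (inner ℝ v z : ℝ) ∂(stdGaussian d) := by
    rw [← integral_neg]
    refine integral_congr_ae (Filter.Eventually.of_forall fun z => ?_)
    show F (f (T z)) * (inner ℝ v (T z) : ℝ) = -(F (f z) * (inner ℝ v z : ℝ))
    rw [hfT z, hinner z]; ring
  have hfinal := key2.symm.trans key
  linarith
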